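/- Let I be a strongly stable monomial ideal in S = K[x_1,...,x_n]. Then |M_i(I,j)| ≥ |M_{≤i}(I,j-1)| for all 1 ≤ i ≤ n and j > 0. Moreover, if β_{i,i+j}(I) = 0, then |M_{i+1}(I,j)| = |M_{≤i+1}(I,j-1)|. -/

import Mathlib

set_option synthInstance.maxHeartbeats 1000000
set_option maxHeartbeats 1000000

open MvPolynomial

namespace Paper

/-! ### Combinatorics of monomials -/

/-- a monomial in `n` variables, encoded by its exponent vector -/
abbrev Mono (n : ℕ) := Fin n →₀ ℕ

/-- total degree of a monomial -/
def mdeg {n : ℕ} (u : Mono n) : ℕ := u.sum fun _ e => e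

/-- `maxVar u` is the largest index (1-indexed) of a variable dividing `u`; `maxVar 1 = 0`. -/
def maxVar {n : ℕ} (u : Mono n) : ℕ := u.support.sup fun i => (i : ℕ) + 1

/-- `LexGT u v` : `u >_lex v` (lexicographic order with `x_1 > x_2 > ⋯ > x_n`). -/
def LexGT {n : ℕ} (u v : Mono n) : Prop :=
  ∃ i : Fin n, v i < u i ∧ ∀ j : Fin n, j < i → u j = v j

/-- strongly stable set of monomials -/
def SStableSet {n : ℕ} (V : Set (Mono n)) : Prop :=
  ∀ u : Mono n, ∀ p q : Fin n, p < q → u + Finsupp.single q 1 ∈ V →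
    u + Finsupp.single p 1 ∈ V

/-- `Dk V k = { u / x_k : u ∈ V, max(u) = k }` (here `k : Fin n` is the 0-indexed variable,
corresponding to the 1-indexed variable `k+1`) -/
def Dk {n : ℕ} (V : Set (Mono n)) (k : Fin n) : Set (Mono n) :=
  {w | w + Finsupp.single k 1 ∈ V ∧ maxVar (w + Finsupp.single k 1) = (k : ℕ) + 1}

/-- `Mle j W = { u ∈ W : max(u) ≤ j }` -/
def Mle {n : ℕ} (j : ℕ) (W : Set (Mono n)) : Set (Mono n) := {u ∈ W | maxVar u ≤ j}

/-- `L` is a lexsegment set of monomials inside `K[x_1,…,x_k]`. -/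
def LexSegIn {n : ℕ} (k : ℕ) (L : Set (Mono n)) : Prop :=
  (∀ u ∈ L, maxVar u ≤ k) ∧
  ∀ u ∈ L, ∀ v : Mono n, mdeg v = mdeg u → maxVar v ≤ k → LexGT v u → v ∈ L

/-- `V` is a `d`-linear lexsegment set of monomials of degree `d`. -/
def DLinearLexSeg {n : ℕ} (d : ℕ) (V : Set (Mono n)) : Prop :=
  (∀ u ∈ V, mdeg u = d) ∧ SStableSet V ∧
    ∀ k : Fin n, LexSegIn ((k : ℕ) + 1) (Dk V k)

/-! ### Ideal-level notions -/

variable {n : ℕ} {K : Type} [Field K]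

/-- `I` is a monomial ideal. -/
def MonomialIdeal (I : Ideal (MvPolynomial (Fin n) K)) : Prop :=
  ∀ p ∈ I, ∀ m ∈ p.support, (monomial m (1 : K)) ∈ I

/-- `u` is a minimal monomial generator of the monomial ideal `I`. -/
def MinGen (I : Ideal (MvPolynomial (Fin n) K)) (u : Mono n) : Prop :=
  monomial u (1 : K) ∈ I ∧ ∀ v : Mono n, v ≤ u → v ≠ u → monomial v (1 : K) ∉ I

/-- stable monomial ideal -/
def StableIdeal (I : Ideal (MvPolynomial (Fin n) K)) : Prop :=
  MonomialIdeal I ∧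
  ∀ u : Mono n, ∀ q : Fin n, maxVar u = (q : ℕ) + 1 → monomial u (1 : K) ∈ I →
    ∀ p : Fin n, p < q →
      monomial (u - Finsupp.single q 1 + Finsupp.single p 1) (1 : K) ∈ I

/-- strongly stable monomial ideal -/
def SStableIdeal (I : Ideal (MvPolynomial (Fin n) K)) : Prop :=
  MonomialIdeal I ∧
  ∀ u : Mono n, ∀ q : Fin n, 0 < u q → monomial u (1 : K) ∈ I →
    ∀ p : Fin n, p < q →
      monomial (u - Finsupp.single q 1 + Finsupp.single p 1) (1 : K) ∈ I

/-- the set of (exponent vectors of) monomials of degree `k` lying in `I` -/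
def monSlice (I : Ideal (MvPolynomial (Fin n) K)) (k : ℕ) : Set (Mono n) :=
  {u | mdeg u = k ∧ monomial u (1 : K) ∈ I}

/-- homogeneous (graded) ideal -/
def HomIdeal (I : Ideal (MvPolynomial (Fin n) K)) : Prop :=
  ∀ p ∈ I, ∀ k : ℕ, homogeneousComponent k p ∈ I

/-! ### Graded components and Hilbert functions -/

/-- the degree-`z` homogeneous component of `I`, as a `K`-subspace -/
noncomputable def hComp (I : Ideal (MvPolynomial (Fin n) K)) (z : ℤ) :
    Submodule K (MvPolynomial (Fin n) K) :=
  if 0 ≤ z then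
    (Submodule.restrictScalars K I) ⊓ homogeneousSubmodule (Fin n) K z.toNat
  else ⊥

/-- Hilbert function `H(I,t)` of the ideal `I` -/
noncomputable def hfI (I : Ideal (MvPolynomial (Fin n) K)) (t : ℕ) : ℕ :=
  Module.finrank K (hComp I (t : ℤ))

/-- Hilbert function `H(S/I,t)` of the quotient `S/I` -/
noncomputable def hfQ (I : Ideal (MvPolynomial (Fin n) K)) (t : ℕ) : ℕ :=
  Module.finrank K
    (homogeneousSubmodule (Fin n) K t ⧸
      Submodule.comap (homogeneousSubmodule (Fin n) K t).subtype
        (Submodule.restrictScalars K I))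

/-! ### Graded Betti numbers via the Koszul complex, and regularity -/

lemma mulX_mem (I : Ideal (MvPolynomial (Fin n) K)) (k : Fin n) (z : ℤ)
    {p : MvPolynomial (Fin n) K} (hp : p ∈ hComp I z) : X k * p ∈ hComp I (z + 1) := by
  unfold hComp at *
  by_cases h : 0 ≤ z
  · simp only [if_pos h] at hp
    have h1 : (0:ℤ) ≤ z + 1 := by omega
    simp only [if_pos h1]
    refine ⟨Ideal.mul_mem_left _ _ hp.1, ?_⟩
    have h2 : p.IsHomogeneous z.toNat := (mem_homogeneousSubmodule _ _).1 hp.2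
    have h3 := (isHomogeneous_X K k).mul h2
    have hz : (z + 1).toNat = 1 + z.toNat := by omega
    exact (mem_homogeneousSubmodule _ _).2 (hz ▸ h3)
  · simp only [if_neg h] at hp
    simp only [Submodule.mem_bot] at hp
    subst hp
    simp

/-- multiplication by `X k` as a linear map between graded components of `I` -/
noncomputable def kosMulX (I : Ideal (MvPolynomial (Fin n) K)) (k : Fin n) (z : ℤ) :
    hComp I z →ₗ[K] hComp I (z + 1) :=
  LinearMap.codRestrict _ ((LinearMap.mulLeft K (X k)).comp (hComp I z).subtype)
    fun p => mulX_mem I k z p.2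

/-- transport along an equality of degrees -/
noncomputable def hCompCast (I : Ideal (MvPolynomial (Fin n) K)) {z z' : ℤ} (h : z = z') :
    hComp I z →ₗ[K] hComp I z' :=
  Submodule.inclusion (le_of_eq (by rw [h]))

/-- the degree-`j` strand of the Koszul differential
`I ⊗ Λ^{i+1} K^n → I ⊗ Λ^i K^n` of `I` (tensored over `S` with the Koszul complex on
`x_1,…,x_n`), whose homology computes `Tor_•(I, K)` with its internal grading. -/
noncomputable def kosD (I : Ideal (MvPolynomial (Fin n) K)) (i : ℕ) (j : ℤ) :
    ({T : Finset (Fin n) // T.card = i + 1} → hComp I (j - (i + 1))) →ₗ[K]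
    ({T : Finset (Fin n) // T.card = i} → hComp I (j - i)) :=
  LinearMap.pi fun T =>
    ∑ k ∈ ((T : Finset (Fin n))ᶜ).attach,
      ((-1 : K) ^ (((T : Finset (Fin n)).filter fun a => a < (k : Fin n)).card)) •
        ((hCompCast I (by omega) :
            hComp I (j - ((i : ℤ) + 1) + 1) →ₗ[K] hComp I (j - i)) ∘ₗ
          (kosMulX I k (j - ((i : ℤ) + 1))) ∘ₗ
          (LinearMap.proj (⟨insert (k : Fin n) (T : Finset (Fin n)), by
              rw [Finset.card_insert_of_notMem (Finset.mem_compl.mp k.2), T.2]⟩ :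
            {T : Finset (Fin n) // T.card = i + 1})))

/-- the cycles of the Koszul complex of `I` at homological position `i`, internal degree `j` -/
noncomputable def bettiKer (I : Ideal (MvPolynomial (Fin n) K)) (i : ℕ) (j : ℤ) :
    Submodule K ({T : Finset (Fin n) // T.card = i} → hComp I (j - i)) :=
  match i with
  | 0 => ⊤
  | i' + 1 => LinearMap.ker (kosD I i' j)

/-- the graded Betti number `β_{ij}(I) = dim_K Tor_i(I,K)_j`, computed as the dimension of
the homology of the degree-`j` strand of the Koszul complex:
`dim ker - dim (im ⊓ ker)`. -/
noncomputable def betti (I : Ideal (MvPolynomial (Fin n) K)) (i : ℕ) (j : ℤ) : ℕ :=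
  Module.finrank K (bettiKer I i j) -
    Module.finrank K (LinearMap.range (kosD I i j) ⊓ bettiKer I i j :
      Submodule K ({T : Finset (Fin n) // T.card = i} → hComp I (j - i)))

/-- Castelnuovo–Mumford regularity `reg(I) = max{k : β_{i,i+k}(I) ≠ 0 for some i}` -/
noncomputable def reg (I : Ideal (MvPolynomial (Fin n) K)) : ℤ :=
  sSup {k : ℤ | ∃ i : ℕ, betti I i ((i : ℤ) + k) ≠ 0}

/-- `M_i(I,j)`: monomials of degree `j` in `I` with `max(u) = i` (1-indexed `i`) -/
def Mset (I : Ideal (MvPolynomial (Fin n) K)) (i j : ℕ) : Set (Mono n) :=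
  {u | mdeg u = j ∧ monomial u (1 : K) ∈ I ∧ maxVar u = i}

/-- `M_{≤i}(I,j)`: monomials of degree `j` in `I` with `max(u) ≤ i` -/
def MleSet (I : Ideal (MvPolynomial (Fin n) K)) (i j : ℕ) : Set (Mono n) :=
  {u | mdeg u = j ∧ monomial u (1 : K) ∈ I ∧ maxVar u ≤ i}

/-! ### Helper lemmas -/

section Helpers

variable {n : ℕ}

lemma mdeg_add (u v : Mono n) : mdeg (u + v) = mdeg u + mdeg v :=
  Finsupp.sum_add_index' (fun _ => rfl) (fun _ _ _ => rfl)

lemma mdeg_single (k : Fin n) : mdeg (Finsupp.single k (1:ℕ)) = 1 := by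
  simp [mdeg]

lemma single_le_of_pos {u : Mono n} {k : Fin n} (h : u k ≠ 0) :
    Finsupp.single k 1 ≤ u := by
  rw [Finsupp.single_le_iff]; omega

lemma sub_add_single {u : Mono n} {k : Fin n} (h : u k ≠ 0) :
    u - Finsupp.single k 1 + Finsupp.single k 1 = u :=
  tsub_add_cancel_of_le (single_le_of_pos h)

lemma mdeg_sub_single {u : Mono n} {k : Fin n} (h : u k ≠ 0) :
    mdeg (u - Finsupp.single k 1) + 1 = mdeg u := by
  conv_rhs => rw [← sub_add_single h]
  rw [mdeg_add, mdeg_single]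

lemma le_maxVar {u : Mono n} {i : Fin n} (h : u i ≠ 0) : (i : ℕ) + 1 ≤ maxVar u := by
  unfold maxVar
  exact Finset.le_sup (f := fun i : Fin n => (i : ℕ) + 1) (Finsupp.mem_support_iff.mpr h)

lemma maxVar_le_iff {u : Mono n} {m : ℕ} :
    maxVar u ≤ m ↔ ∀ i : Fin n, u i ≠ 0 → (i : ℕ) + 1 ≤ m := by
  rw [maxVar, Finset.sup_le_iff]
  constructor
  · intro h i hi; exact h i (Finsupp.mem_support_iff.mpr hi)
  · intro h i hi; exact h i (Finsupp.mem_support_iff.mp hi)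

lemma maxVar_add_single (w : Mono n) (k : Fin n) :
    maxVar (w + Finsupp.single k 1) = max (maxVar w) ((k : ℕ) + 1) := by
  apply le_antisymm
  · rw [maxVar_le_iff]
    intro i hi
    rw [Finsupp.add_apply] at hi
    by_cases hik : i = k
    · subst hik; exact le_max_right _ _
    · rw [Finsupp.single_apply, if_neg (by exact fun h => hik h.symm)] at hi
      exact le_max_of_le_left (le_maxVar (by simpa using hi))
  · apply max_le
    · rw [maxVar_le_iff]; intro i hi
      apply le_maxVar
      rw [Finsupp.add_apply]; omega
    · apply le_maxVar
      rw [Finsupp.add_apply, Finsupp.single_apply, if_pos rfl]; omega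

lemma maxVar_eq_succ {u : Mono n} {k : Fin n} (h : maxVar u = (k : ℕ) + 1) :
    u k ≠ 0 := by
  have hne : u.support.Nonempty := by
    rw [Finsupp.support_nonempty_iff]
    intro h0; rw [h0] at h; simp [maxVar] at h
  obtain ⟨i, hi, hsup⟩ := Finset.exists_mem_eq_sup _ hne (fun i : Fin n => (i : ℕ) + 1)
  rw [maxVar] at h; rw [h] at hsup
  have : i = k := Fin.ext (by omega)
  subst this
  exact Finsupp.mem_support_iff.mp hi

lemma maxVar_sub_le (u : Mono n) (k : Fin n) :
    maxVar (u - Finsupp.single k 1) ≤ maxVar u := by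
  rw [maxVar_le_iff]
  intro i hi
  apply le_maxVar
  rw [Finsupp.tsub_apply] at hi; omega

lemma mdeg_finite (j : ℕ) : {u : Mono n | mdeg u = j}.Finite := by
  apply Set.Finite.subset (Set.finite_Icc (0 : Mono n)
    (Finsupp.equivFunOnFinite.symm fun _ => j))
  intro u hu
  simp only [Set.mem_setOf_eq] at hu
  constructor
  · exact zero_le
  · intro i
    show u i ≤ j
    rw [← hu]
    by_cases h : u i = 0
    · omega
    · exact Finset.single_le_sum (f := fun i => u i) (fun _ _ => Nat.zero_le _)
        (Finsupp.mem_support_iff.mpr h)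

end Helpers

section IdealHelpers

variable {n : ℕ} {K : Type} [Field K]

lemma monomial_mem_add {I : Ideal (MvPolynomial (Fin n) K)} {v : Mono n}
    (hv : monomial v (1:K) ∈ I) (w : Mono n) : monomial (w + v) (1:K) ∈ I := by
  have : (monomial (w + v) (1:K)) = monomial w (1:K) * monomial v (1:K) := by
    rw [monomial_mul, one_mul]
  rw [this]
  exact Ideal.mul_mem_left _ _ hv

/-- if `u ∈ I` is not a minimal generator and `maxVar u = k+1` then `u / x_k ∈ I` -/
lemma step_down {I : Ideal (MvPolynomial (Fin n) K)} (hI : SStableIdeal I)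
    {u : Mono n} {k : Fin n} (hu : monomial u (1:K) ∈ I)
    (hmax : maxVar u = (k : ℕ) + 1) (hng : ¬ MinGen I u) :
    monomial (u - Finsupp.single k 1) (1:K) ∈ I := by
  rw [MinGen, not_and_or] at hng
  rcases hng with h | h
  · exact absurd hu h
  push_neg at h
  obtain ⟨v, hvle, hvne, hvI⟩ := h
  obtain ⟨l, hl⟩ : ∃ l : Fin n, v l < u l := by
    by_contra hc
    push_neg at hc
    exact hvne (le_antisymm hvle (Finsupp.le_def.mpr hc))
  have hul : u l ≠ 0 := by omega
  have h1 : monomial (u - Finsupp.single l 1) (1:K) ∈ I := by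
    have hle : v ≤ u - Finsupp.single l 1 := by
      rw [Finsupp.le_def]
      intro i
      rw [Finsupp.tsub_apply, Finsupp.single_apply]
      have := Finsupp.le_def.mp hvle i
      by_cases hil : i = l
      · subst hil; simp; omega
      · rw [if_neg (fun h => hil h.symm)]; omega
    have := monomial_mem_add hvI (u - Finsupp.single l 1 - v)
    rwa [tsub_add_cancel_of_le hle] at this
  by_cases hlk : l = k
  · subst hlk; exact h1
  · have hlltk : l < k := by
      have h3 : (l : ℕ) + 1 ≤ (k : ℕ) + 1 := hmax ▸ le_maxVar hul
      have h4 : (l : ℕ) ≠ (k : ℕ) := fun h => hlk (Fin.ext h)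
      exact Fin.lt_def.mpr (by omega)
    have huk : u k ≠ 0 := maxVar_eq_succ hmax
    have h2 := hI.2 (u - Finsupp.single l 1) k
      (by rw [Finsupp.tsub_apply, Finsupp.single_apply, if_neg hlk]; omega) h1 l hlltk
    have heq : u - Finsupp.single l 1 - Finsupp.single k 1 + Finsupp.single l 1
        = u - Finsupp.single k 1 := by
      ext i
      by_cases hil : l = i
      · subst hil
        simp only [Finsupp.add_apply, Finsupp.tsub_apply, Finsupp.single_apply,
          if_pos rfl, if_neg (show ¬ k = l from fun h => hlk h.symm), if_true]
        omega
      · by_cases hik : k = i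
        · subst hik
          simp only [Finsupp.add_apply, Finsupp.tsub_apply, Finsupp.single_apply,
            if_pos rfl, if_neg hil]
          omega
        · simp only [Finsupp.add_apply, Finsupp.tsub_apply, Finsupp.single_apply,
            if_neg hil, if_neg hik]
          omega
    rwa [heq] at h2
end IdealHelpers

section HCompHelpers

variable {n : ℕ} {K : Type} [Field K]

lemma mdeg_eq_degree (u : Mono n) : mdeg u = Finsupp.degree u := rfl

lemma monomial_mem_hComp {I : Ideal (MvPolynomial (Fin n) K)} {u : Mono n} {z : ℤ}
    (hz : 0 ≤ z) (hd : (mdeg u : ℤ) = z) (hu : monomial u (1:K) ∈ I) :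
    monomial u (1:K) ∈ hComp I z := by
  unfold hComp
  rw [if_pos hz]
  have h2 : (monomial u (1:K)).IsHomogeneous z.toNat :=
    isHomogeneous_monomial _ (by rw [← mdeg_eq_degree]; omega)
  exact ⟨hu, h2⟩

lemma hComp_mem_ideal {I : Ideal (MvPolynomial (Fin n) K)} {z : ℤ}
    {p : MvPolynomial (Fin n) K} (hp : p ∈ hComp I z) : p ∈ I := by
  unfold hComp at hp
  by_cases hz : 0 ≤ z
  · rw [if_pos hz] at hp; exact hp.1
  · rw [if_neg hz] at hp; simp only [Submodule.mem_bot] at hp; simp [hp]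

instance fdHomog (d : ℕ) : FiniteDimensional K (homogeneousSubmodule (Fin n) K d) := by
  have hfin : ((fun u : Mono n => (monomial u (1:K) : MvPolynomial (Fin n) K)) ''
      {u | mdeg u = d}).Finite := (mdeg_finite d).image _
  have hle : homogeneousSubmodule (Fin n) K d ≤ Submodule.span K
      ((fun u : Mono n => (monomial u (1:K) : MvPolynomial (Fin n) K)) ''
        {u | mdeg u = d}) := by
    intro p hp
    rw [mem_homogeneousSubmodule] at hp
    rw [p.as_sum]
    apply Submodule.sum_mem
    intro v hv
    have h1 : (monomial v (coeff v p) : MvPolynomial (Fin n) K)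
        = coeff v p • monomial v (1:K) := by
      rw [smul_monomial, smul_eq_mul, mul_one]
    rw [h1]
    apply Submodule.smul_mem
    apply Submodule.subset_span
    refine ⟨v, ?_, rfl⟩
    have := hp (mem_support_iff.mp hv)
    simp [mdeg_eq_degree, Finsupp.degree, Finsupp.weight, Finsupp.linearCombination,
      Finsupp.sum] at this ⊢
    exact this
  have := FiniteDimensional.span_of_finite K hfin
  exact Submodule.finiteDimensional_of_le hle

instance fdHComp (I : Ideal (MvPolynomial (Fin n) K)) (z : ℤ) :
    FiniteDimensional K (hComp I z) := by
  unfold hComp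
  by_cases hz : 0 ≤ z
  · rw [if_pos hz]; infer_instance
  · rw [if_neg hz]; infer_instance

lemma map_mle_subset {I : Ideal (MvPolynomial (Fin n) K)} {i j : ℕ}
    (hj : 0 < j) (k : Fin n) (hk : (k : ℕ) + 1 = i) :
    (fun u : Mono n => u + Finsupp.single k 1) '' MleSet I i (j-1) ⊆ Mset I i j := by
  rintro _ ⟨u, ⟨hd, hmem, hle⟩, rfl⟩
  dsimp only
  refine ⟨?_, ?_, ?_⟩
  · rw [mdeg_add, mdeg_single, hd]; omega
  · rw [add_comm]; exact monomial_mem_add hmem _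
  · rw [maxVar_add_single, hk]
    omega

end HCompHelpers

section EK

variable {n : ℕ} {K : Type} [Field K]

lemma X_mul_monomial_one (s : Fin n) (m : Mono n) :
    X (R := K) s * monomial m 1 = monomial (m + Finsupp.single s 1) 1 := by
  rw [X, monomial_mul, one_mul, add_comm]

lemma kosD_apply_coe (I : Ideal (MvPolynomial (Fin n) K)) (i : ℕ) (j : ℤ)
    (w : {T : Finset (Fin n) // T.card = i + 1} → hComp I (j - (i + 1)))
    (T : {T : Finset (Fin n) // T.card = i}) :
    ((kosD I i j w T : hComp I (j - i)) : MvPolynomial (Fin n) K) =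
      ∑ k ∈ ((T : Finset (Fin n))ᶜ).attach,
        ((-1 : K) ^ (((T : Finset (Fin n)).filter fun a => a < (k : Fin n)).card)) •
          (X (k : Fin n) *
            ((w (⟨insert (k : Fin n) (T : Finset (Fin n)), by
              rw [Finset.card_insert_of_notMem (Finset.mem_compl.mp k.2), T.2]⟩) :
              hComp I (j - (i + 1))) : MvPolynomial (Fin n) K)) := by
  simp only [kosD, LinearMap.pi_apply, LinearMap.sum_apply, LinearMap.smul_apply,
    LinearMap.coe_comp, Function.comp_apply, LinearMap.proj_apply,
    AddSubmonoidClass.coe_finset_sum, SetLike.val_smul, hCompCast, kosMulX,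
    Submodule.coe_inclusion, LinearMap.codRestrict_apply, LinearMap.mulLeft_apply,
    Submodule.coe_subtype]
  rfl

variable (I : Ideal (MvPolynomial (Fin n) K)) (u : Mono n) (k : Fin n)

/-- the Eliahou–Kervaire Koszul cycle attached to a monomial `u` with `maxVar u = k+1`,
with respect to the full index set `S = Iic k` -/
noncomputable def ekCycle (jz : ℤ) (i : ℕ)
    (hm : ∀ l : Fin n, l ≤ k →
      monomial (u - Finsupp.single k 1 + Finsupp.single l 1) (1:K) ∈ hComp I jz) :
    {T : Finset (Fin n) // T.card = i} → hComp I jz :=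
  fun T => ∑ l ∈ (Finset.Iic k).attach,
    if (T : Finset (Fin n)) = (Finset.Iic k).erase l.1 then
      ((-1:K) ^ ((l.1 : Fin n) : ℕ)) •
        (⟨monomial (u - Finsupp.single k 1 + Finsupp.single l.1 1) (1:K),
          hm l.1 (Finset.mem_Iic.mp l.2)⟩ : hComp I jz)
    else 0

lemma ekCycle_val (jz : ℤ) (i : ℕ) (hm) (T : {T : Finset (Fin n) // T.card = i}) :
    ((ekCycle I u k jz i hm T : hComp I jz) : MvPolynomial (Fin n) K) =
      ∑ l ∈ (Finset.Iic k).attach,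
        if (T : Finset (Fin n)) = (Finset.Iic k).erase l.1 then
          ((-1:K) ^ ((l.1 : Fin n) : ℕ)) •
            monomial (u - Finsupp.single k 1 + Finsupp.single l.1 1) (1:K)
        else 0 := by
  simp only [ekCycle, AddSubmonoidClass.coe_finset_sum,
    apply_ite (fun x : hComp I jz => (x : MvPolynomial (Fin n) K)), SetLike.val_smul,
    ZeroMemClass.coe_zero]

lemma ekCycle_val_erase (jz : ℤ) (i : ℕ) (hm) (l : Fin n) (hl : l ∈ Finset.Iic k)
    (T : {T : Finset (Fin n) // T.card = i})
    (hT : (T : Finset (Fin n)) = (Finset.Iic k).erase l) :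
    ((ekCycle I u k jz i hm T : hComp I jz) : MvPolynomial (Fin n) K) =
      ((-1:K) ^ (l : ℕ)) •
        monomial (u - Finsupp.single k 1 + Finsupp.single l 1) (1:K) := by
  rw [ekCycle_val]
  rw [Finset.sum_eq_single_of_mem (⟨l, hl⟩ : {x // x ∈ Finset.Iic k})
    (Finset.mem_attach _ _)]
  · rw [if_pos hT]
  · intro b _ hbl
    rw [if_neg]
    intro h
    rw [hT] at h
    exact hbl (Subtype.ext ((Finset.erase_inj _ hl).mp h).symm)

lemma ekCycle_val_zero (jz : ℤ) (i : ℕ) (hm) (T : {T : Finset (Fin n) // T.card = i})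
    (h : ∀ l : Fin n, l ∈ Finset.Iic k → (T : Finset (Fin n)) ≠ (Finset.Iic k).erase l) :
    ((ekCycle I u k jz i hm T : hComp I jz) : MvPolynomial (Fin n) K) = 0 := by
  rw [ekCycle_val]
  apply Finset.sum_eq_zero
  intro l _
  rw [if_neg (h l.1 l.2)]

lemma ekCycle_ker (jj : ℤ) (i' : ℕ) (hkv : (k : ℕ) = i' + 1)
    (hm : ∀ l : Fin n, l ≤ k →
      monomial (u - Finsupp.single k 1 + Finsupp.single l 1) (1:K)
        ∈ hComp I (jj - (i' + 1))) :
    kosD I i' jj (ekCycle I u k (jj - (i' + 1)) (i' + 1) hm) = 0 := by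
  apply _root_.funext
  intro Q
  rw [Pi.zero_apply]
  apply Subtype.ext
  rw [kosD_apply_coe, ZeroMemClass.coe_zero]
  by_cases hQS : (Q : Finset (Fin n)) ⊆ Finset.Iic k
  case neg =>
    apply Finset.sum_eq_zero
    intro k' _
    have h0 : ((ekCycle I u k (jj - (i' + 1)) (i' + 1) hm
        ⟨insert (k' : Fin n) (Q : Finset (Fin n)), by
          rw [Finset.card_insert_of_notMem (Finset.mem_compl.mp k'.2), Q.2]⟩ :
        hComp I (jj - (i' + 1))) : MvPolynomial (Fin n) K) = 0 := by
      apply ekCycle_val_zero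
      intro l hl hins
      apply hQS
      intro x hx
      have hx2 : x ∈ (Finset.Iic k).erase l := by
        rw [← hins]
        exact Finset.mem_insert_of_mem hx
      exact Finset.erase_subset _ _ hx2
    rw [h0, mul_zero, smul_zero]
  case pos =>
    have hScard : (Finset.Iic k).card = i' + 2 := by rw [Fin.card_Iic, hkv]
    have hdiff : ((Finset.Iic k) \ (Q : Finset (Fin n))).card = 2 := by
      rw [Finset.card_sdiff_of_subset hQS, hScard, Q.2]
      omega
    obtain ⟨a, b, hab, hset⟩ : ∃ a b : Fin n, a < b ∧
        (Finset.Iic k) \ (Q : Finset (Fin n)) = {a, b} := by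
      obtain ⟨a, b, hne, hset⟩ := Finset.card_eq_two.mp hdiff
      rcases lt_or_gt_of_ne hne with h | h
      · exact ⟨a, b, h, hset⟩
      · exact ⟨b, a, h, by rw [hset, Finset.pair_comm]⟩
    have haSQ : a ∈ (Finset.Iic k) \ (Q : Finset (Fin n)) := by rw [hset]; simp
    have hbSQ : b ∈ (Finset.Iic k) \ (Q : Finset (Fin n)) := by rw [hset]; simp
    have haS : a ∈ Finset.Iic k := (Finset.mem_sdiff.mp haSQ).1
    have hbS : b ∈ Finset.Iic k := (Finset.mem_sdiff.mp hbSQ).1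
    have haQ : a ∉ (Q : Finset (Fin n)) := (Finset.mem_sdiff.mp haSQ).2
    have hbQ : b ∉ (Q : Finset (Fin n)) := (Finset.mem_sdiff.mp hbSQ).2
    have hSiff : ∀ x : Fin n, x ∈ Finset.Iic k ↔
        (x ∈ (Q : Finset (Fin n)) ∨ x = a ∨ x = b) := by
      intro x
      constructor
      · intro hx
        by_cases hxQ : x ∈ (Q : Finset (Fin n))
        · exact Or.inl hxQ
        · have : x ∈ (Finset.Iic k) \ (Q : Finset (Fin n)) :=
            Finset.mem_sdiff.mpr ⟨hx, hxQ⟩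
          rw [hset] at this
          simp only [Finset.mem_insert, Finset.mem_singleton] at this
          exact Or.inr this
      · rintro (h | rfl | rfl)
        · exact hQS h
        · exact haS
        · exact hbS
    have hins_a : insert a (Q : Finset (Fin n)) = (Finset.Iic k).erase b := by
      ext x
      simp only [Finset.mem_insert, Finset.mem_erase, hSiff x]
      constructor
      · rintro (rfl | hx)
        · exact ⟨hab.ne, Or.inr (Or.inl rfl)⟩
        · exact ⟨fun h => hbQ (h ▸ hx), Or.inl hx⟩
      · rintro ⟨hxb, hx | rfl | rfl⟩
        · exact Or.inr hx
        · exact Or.inl rfl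
        · exact absurd rfl hxb
    have hins_b : insert b (Q : Finset (Fin n)) = (Finset.Iic k).erase a := by
      ext x
      simp only [Finset.mem_insert, Finset.mem_erase, hSiff x]
      constructor
      · rintro (rfl | hx)
        · exact ⟨hab.ne', Or.inr (Or.inr rfl)⟩
        · exact ⟨fun h => haQ (h ▸ hx), Or.inl hx⟩
      · rintro ⟨hxa, hx | rfl | rfl⟩
        · exact Or.inr hx
        · exact absurd rfl hxa
        · exact Or.inl rfl
    set a' : {x // x ∈ ((Q : Finset (Fin n))ᶜ)} := ⟨a, Finset.mem_compl.mpr haQ⟩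
      with ha'def
    set b' : {x // x ∈ ((Q : Finset (Fin n))ᶜ)} := ⟨b, Finset.mem_compl.mpr hbQ⟩
      with hb'def
    have hsub : ({a', b'} : Finset {x // x ∈ ((Q : Finset (Fin n))ᶜ)}) ⊆
        ((Q : Finset (Fin n))ᶜ).attach := fun x _ => Finset.mem_attach _ _
    rw [← Finset.sum_subset hsub]
    · have ha'b' : a' ≠ b' := fun h => hab.ne (congrArg Subtype.val h)
      rw [Finset.sum_pair ha'b']
      have hva := ekCycle_val_erase I u k (jj - (i' + 1)) (i' + 1) hm b hbS
        ⟨insert ((a' : Fin n)) (Q : Finset (Fin n)), by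
          rw [Finset.card_insert_of_notMem (Finset.mem_compl.mp a'.2), Q.2]⟩
        (by exact hins_a)
      have hvb := ekCycle_val_erase I u k (jj - (i' + 1)) (i' + 1) hm a haS
        ⟨insert ((b' : Fin n)) (Q : Finset (Fin n)), by
          rw [Finset.card_insert_of_notMem (Finset.mem_compl.mp b'.2), Q.2]⟩
        (by exact hins_b)
      rw [hva, hvb]
      rw [mul_smul_comm, mul_smul_comm, X_mul_monomial_one, X_mul_monomial_one,
        smul_smul, smul_smul]
      have hmon : u - Finsupp.single k 1 + Finsupp.single b 1 + Finsupp.single (a' : Fin n) 1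
          = u - Finsupp.single k 1 + Finsupp.single a 1 + Finsupp.single (b' : Fin n) 1 := by
        show u - Finsupp.single k 1 + Finsupp.single b 1 + Finsupp.single a 1
          = u - Finsupp.single k 1 + Finsupp.single a 1 + Finsupp.single b 1
        rw [add_right_comm]
      rw [hmon, ← add_smul]
      have hqa : (((Q : Finset (Fin n)).filter fun x => x < (a' : Fin n)).card = (a : ℕ)) := by
        have heq : ((Q : Finset (Fin n)).filter fun x => x < (a' : Fin n)) = Finset.Iio a := by
          ext x
          simp only [Finset.mem_filter, Finset.mem_Iio, ha'def]
          constructor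
          · rintro ⟨_, h⟩; exact h
          · intro hx
            refine ⟨?_, hx⟩
            have hxS : x ∈ Finset.Iic k :=
              Finset.mem_Iic.mpr (le_of_lt (lt_of_lt_of_le hx (Finset.mem_Iic.mp haS)))
            rcases (hSiff x).mp hxS with h | rfl | rfl
            · exact h
            · exact absurd hx (lt_irrefl _)
            · exact absurd (hx.trans hab) (lt_irrefl _)
        rw [heq, Fin.card_Iio]
      have hqb : (((Q : Finset (Fin n)).filter fun x => x < (b' : Fin n)).card
          = (b : ℕ) - 1) := by
        have heq : ((Q : Finset (Fin n)).filter fun x => x < (b' : Fin n))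
            = (Finset.Iio b).erase a := by
          ext x
          simp only [Finset.mem_filter, Finset.mem_Iio, Finset.mem_erase, hb'def]
          constructor
          · rintro ⟨hxQ, h⟩
            exact ⟨fun hxa => haQ (hxa ▸ hxQ), h⟩
          · rintro ⟨hxa, hx⟩
            refine ⟨?_, hx⟩
            have hxS : x ∈ Finset.Iic k :=
              Finset.mem_Iic.mpr (le_of_lt (lt_of_lt_of_le hx (Finset.mem_Iic.mp hbS)))
            rcases (hSiff x).mp hxS with h | rfl | rfl
            · exact h
            · exact absurd rfl hxa
            · exact absurd hx (lt_irrefl _)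
        rw [heq, Finset.card_erase_of_mem (Finset.mem_Iio.mpr hab), Fin.card_Iio]
      rw [hqa, hqb]
      have hblt : (a : ℕ) < (b : ℕ) := hab
      have hsgn : ((-1:K) ^ (a : ℕ) * (-1:K) ^ (b : ℕ)
          + (-1:K) ^ ((b : ℕ) - 1) * (-1:K) ^ (a : ℕ)) = 0 := by
        rw [← pow_add, ← pow_add]
        have h1 : (a : ℕ) + (b : ℕ) = ((b : ℕ) - 1 + (a : ℕ)) + 1 := by omega
        rw [h1, pow_succ]
        ring
      rw [hsgn, zero_smul]
    · intro k' _ hk'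
      have hk'a : (k' : Fin n) ≠ a := fun h => hk' (by
        simp only [Finset.mem_insert, Finset.mem_singleton]
        exact Or.inl (Subtype.ext h))
      have hk'b : (k' : Fin n) ≠ b := fun h => hk' (by
        simp only [Finset.mem_insert, Finset.mem_singleton]
        exact Or.inr (Subtype.ext h))
      have h0 : ((ekCycle I u k (jj - (i' + 1)) (i' + 1) hm
          ⟨insert (k' : Fin n) (Q : Finset (Fin n)), by
            rw [Finset.card_insert_of_notMem (Finset.mem_compl.mp k'.2), Q.2]⟩ :
          hComp I (jj - (i' + 1))) : MvPolynomial (Fin n) K) = 0 := by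
        apply ekCycle_val_zero
        intro l hl hins
        have hk'S : (k' : Fin n) ∈ Finset.Iic k := by
          have : (k' : Fin n) ∈ (Finset.Iic k).erase l :=
            hins ▸ Finset.mem_insert_self _ _
          exact Finset.mem_of_mem_erase this
        have hk'SQ : (k' : Fin n) ∈ (Finset.Iic k) \ (Q : Finset (Fin n)) :=
          Finset.mem_sdiff.mpr ⟨hk'S, Finset.mem_compl.mp k'.2⟩
        rw [hset] at hk'SQ
        simp only [Finset.mem_insert, Finset.mem_singleton] at hk'SQ
        rcases hk'SQ with h | h
        · exact hk'a h
        · exact hk'b h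
      rw [h0, mul_zero, smul_zero]

lemma ekCycle_mem_bettiKer (jj : ℤ) (i : ℕ) (hkv : (k : ℕ) = i)
    (hm : ∀ l : Fin n, l ≤ k →
      monomial (u - Finsupp.single k 1 + Finsupp.single l 1) (1:K)
        ∈ hComp I (jj - (i : ℤ))) :
    ekCycle I u k (jj - (i : ℤ)) i hm ∈ bettiKer I i jj := by
  cases i with
  | zero => exact Submodule.mem_top
  | succ i' =>
    exact LinearMap.mem_ker.mpr (ekCycle_ker I u k jj i' hkv hm)

end EK

section Final

variable {n : ℕ} {K : Type} [Field K]

/-- Eliahou–Kervaire nonvanishing: a minimal generator of degree `j` with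
`maxVar = i+1` forces `β_{i,i+j}(I) ≠ 0`. -/
lemma betti_ne_zero_of_minGen {I : Ideal (MvPolynomial (Fin n) K)} (hI : SStableIdeal I)
    {i j : ℕ} (hn : i + 1 ≤ n) (hj : 0 < j) {u : Mono n}
    (hdeg : mdeg u = j) (hmax : maxVar u = i + 1) (hgen : MinGen I u) :
    betti I i ((i : ℤ) + (j : ℤ)) ≠ 0 := by
  set k : Fin n := ⟨i, by omega⟩ with hkdef
  have hkv : (k : ℕ) = i := rfl
  have huk : u k ≠ 0 := maxVar_eq_succ (show maxVar u = (k : ℕ) + 1 from hmax)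
  have hjz : (0:ℤ) ≤ ((i : ℤ) + (j : ℤ)) - (i : ℤ) := by omega
  have hm : ∀ l : Fin n, l ≤ k →
      monomial (u - Finsupp.single k 1 + Finsupp.single l 1) (1:K)
        ∈ hComp I (((i : ℤ) + (j : ℤ)) - (i : ℤ)) := by
    intro l hl
    apply monomial_mem_hComp hjz
    · rw [mdeg_add, mdeg_single]
      have h1 := mdeg_sub_single huk
      push_cast
      omega
    · rcases eq_or_lt_of_le hl with heq | hlt
      · have h2 : u - Finsupp.single k 1 + Finsupp.single l 1 = u := by
          rw [heq]; exact sub_add_single huk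
        rw [h2]; exact hgen.1
      · exact hI.2 u k (Nat.pos_of_ne_zero huk) hgen.1 l hlt
  set z := ekCycle I u k (((i : ℤ) + (j : ℤ)) - (i : ℤ)) i hm with hzdef
  have hker : z ∈ bettiKer I i ((i : ℤ) + (j : ℤ)) :=
    ekCycle_mem_bettiKer I u k ((i : ℤ) + (j : ℤ)) i hkv hm
  have hnr : z ∉ LinearMap.range (kosD I i ((i : ℤ) + (j : ℤ))) := by
    rintro ⟨w, hw⟩
    have hvan : ∀ (T' : {T : Finset (Fin n) // T.card = i + 1}) (k' : Fin n) (c : K),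
        coeff u (c • (X k' *
          ((w T' : hComp I (((i : ℤ) + (j : ℤ)) - ((i : ℤ) + 1))) :
            MvPolynomial (Fin n) K))) = 0 := by
      intro T' k' c
      rw [coeff_smul, coeff_X_mul']
      split_ifs with hsupp
      · have hcz : coeff (u - Finsupp.single k' 1)
            ((w T' : hComp I (((i : ℤ) + (j : ℤ)) - ((i : ℤ) + 1))) :
              MvPolynomial (Fin n) K) = 0 := by
          by_contra hc
          have hpI : ((w T' : hComp I (((i : ℤ) + (j : ℤ)) - ((i : ℤ) + 1))) :
              MvPolynomial (Fin n) K) ∈ I := hComp_mem_ideal (w T').2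
          have hmem := hI.1 _ hpI _ (mem_support_iff.mpr hc)
          have hne : u - Finsupp.single k' 1 ≠ u := by
            intro he
            have h3 := DFunLike.congr_fun he k'
            rw [Finsupp.tsub_apply, Finsupp.single_apply, if_pos rfl] at h3
            have husupp : u k' ≠ 0 := Finsupp.mem_support_iff.mp hsupp
            omega
          exact hgen.2 _ tsub_le_self hne hmem
        rw [hcz, smul_zero]
      · rw [smul_zero]
    have hkS : k ∈ Finset.Iic k := Finset.mem_Iic.mpr le_rfl
    have hTc : ((Finset.Iic k).erase k).card = i := by
      rw [Finset.card_erase_of_mem hkS, Fin.card_Iic]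
      omega
    have hcomp := congrFun hw ⟨(Finset.Iic k).erase k, hTc⟩
    have hL := congrArg
      (fun p : hComp I (((i : ℤ) + (j : ℤ)) - (i : ℤ)) =>
        coeff u (p : MvPolynomial (Fin n) K)) hcomp
    have hLHS : coeff u
        ((kosD I i ((i : ℤ) + (j : ℤ)) w ⟨(Finset.Iic k).erase k, hTc⟩ :
          hComp I (((i : ℤ) + (j : ℤ)) - (i : ℤ))) : MvPolynomial (Fin n) K) = 0 := by
      rw [kosD_apply_coe, coeff_sum]
      exact Finset.sum_eq_zero (fun k' _ => hvan _ _ _)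
    have hRHS : coeff u
        ((z ⟨(Finset.Iic k).erase k, hTc⟩ :
          hComp I (((i : ℤ) + (j : ℤ)) - (i : ℤ))) : MvPolynomial (Fin n) K)
        = (-1:K) ^ i := by
      rw [hzdef, ekCycle_val_erase I u k _ i hm k hkS _ rfl, sub_add_single huk,
        coeff_smul, coeff_monomial, if_pos rfl, smul_eq_mul, mul_one, hkv]
    rw [hLHS, hRHS] at hL
    exact pow_ne_zero i (by norm_num : (-1:K) ≠ 0) hL.symm
  intro hbz
  have hlt : (LinearMap.range (kosD I i ((i : ℤ) + (j : ℤ)))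
        ⊓ bettiKer I i ((i : ℤ) + (j : ℤ)))
      < bettiKer I i ((i : ℤ) + (j : ℤ)) := by
    refine lt_of_le_of_ne inf_le_right (fun he => hnr ?_)
    have hz2 : z ∈ (LinearMap.range (kosD I i ((i : ℤ) + (j : ℤ)))
        ⊓ bettiKer I i ((i : ℤ) + (j : ℤ))) := by
      rw [he]; exact hker
    exact (Submodule.mem_inf.mp hz2).1
  have hrank := Submodule.finrank_lt_finrank_of_lt hlt
  unfold betti at hbz
  omega

end Final
/-- Lemma on shadows of strongly stable ideals, with equality in the
absence of the corresponding Betti number. -/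
theorem stmt14 (n : ℕ) (K : Type) [Field K] (I : Ideal (MvPolynomial (Fin n) K))
    (hI : SStableIdeal I) :
    (∀ i j : ℕ, 1 ≤ i → i ≤ n → 0 < j →
        (MleSet I i (j - 1)).ncard ≤ (Mset I i j).ncard) ∧
    (∀ i j : ℕ, i + 1 ≤ n → 0 < j → betti I i ((i : ℤ) + (j : ℤ)) = 0 →
        (Mset I (i + 1) j).ncard = (MleSet I (i + 1) (j - 1)).ncard) := by
  constructor
  · intro i j h1 h2 h3
    set k : Fin n := ⟨i - 1, by omega⟩ with hkdef
    have hk1 : (k : ℕ) + 1 = i := by simp [hkdef]; omega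
    have hinj : Function.Injective (fun u : Mono n => u + Finsupp.single k 1) :=
      add_left_injective _
    calc (MleSet I i (j-1)).ncard
        = ((fun u : Mono n => u + Finsupp.single k 1) '' MleSet I i (j-1)).ncard :=
          (Set.ncard_image_of_injective _ hinj).symm
      _ ≤ (Mset I i j).ncard := by
          exact Set.ncard_le_ncard (map_mle_subset h3 k hk1)
            ((mdeg_finite j).subset (fun u hu => hu.1))
  · intro i j hn hj hb
    set k : Fin n := ⟨i, by omega⟩ with hkdef
    have hk1 : (k : ℕ) + 1 = i + 1 := rfl
    have hinj : Function.Injective (fun u : Mono n => u + Finsupp.single k 1) :=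
      add_left_injective _
    have himg : Mset I (i+1) j = (fun u : Mono n => u + Finsupp.single k 1) ''
        MleSet I (i+1) (j-1) := by
      apply Set.Subset.antisymm
      · intro u hu
        obtain ⟨hd, hmem, hmax⟩ := hu
        have huk : u k ≠ 0 := maxVar_eq_succ (by rw [hmax, hk1])
        have hng : ¬ MinGen I u := fun hgen =>
          betti_ne_zero_of_minGen hI hn hj hd hmax hgen hb
        have hw : monomial (u - Finsupp.single k 1) (1:K) ∈ I :=
          step_down hI hmem (by rw [hmax, hk1]) hng
        refine ⟨u - Finsupp.single k 1, ⟨?_, hw, ?_⟩, ?_⟩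
        · have := mdeg_sub_single huk
          omega
        · exact le_trans (maxVar_sub_le u k) (le_of_eq hmax)
        · exact sub_add_single huk
      · exact map_mle_subset hj k hk1
    rw [himg, Set.ncard_image_of_injective _ hinj]

end Paper
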